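/- Let R be a commutative ring, q ∈ R, and (A, σ_A) a twisted commutative R-algebra with y ∈ A satisfying σ_A(y) = qy. Let σ be the σ_A-semilinear ring endomorphism of A⟨ξ⟩_{q,y} with σ(ξ^{[n]}) = Σ_{i=0}^{n} y^i ξ^{[n−i]}. Then for all m, n ∈ ℕ: ξ^{[n]} · σ^n(ξ^{[m]}) = (m+n choose n)_q ξ^{[n+m]} in A⟨ξ⟩_{q,y}. -/

import Mathlib

def qInt {R : Type*} [CommRing R] (q : R) (m : ℕ) : R := ∑ i ∈ Finset.range m, q ^ i

def qChoose {R : Type*} [CommRing R] (q : R) : ℕ → ℕ → R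
  | _, 0 => 1
  | 0, _ + 1 => 0
  | n + 1, k + 1 => qChoose q n k + q ^ (k + 1) * qChoose q n (k + 1)

def dpCoeff {A : Type*} [CommRing A] (q y : A) (m n i : ℕ) : A :=
  (-1 : A) ^ i * q ^ (i * (i - 1) / 2) * qChoose q (m + n - i) m * qChoose q m i * y ^ i

section aux
variable {A : Type*} [CommRing A] (q : A)

lemma qChoose_zero_right (n : ℕ) : qChoose q n 0 = 1 := by cases n <;> rfl

lemma qChoose_zero_succ (k : ℕ) : qChoose q 0 (k + 1) = 0 := rfl

lemma qChoose_succ_succ (n k : ℕ) :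
    qChoose q (n + 1) (k + 1) = qChoose q n k + q ^ (k + 1) * qChoose q n (k + 1) := rfl

lemma qChoose_eq_zero : ∀ {n k : ℕ}, n < k → qChoose q n k = 0 := by
  intro n
  induction n with
  | zero => intro k h; cases k with
    | zero => omega
    | succ k => rfl
  | succ n ih =>
    intro k h
    cases k with
    | zero => omega
    | succ k =>
      rw [qChoose_succ_succ, ih (by omega), ih (by omega)]; ring

lemma qChoose_self (n : ℕ) : qChoose q n n = 1 := by
  induction n with
  | zero => rfl
  | succ n ih => rw [qChoose_succ_succ, ih, qChoose_eq_zero q (by omega)]; ring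

lemma qChoose_one_right (n : ℕ) : qChoose q n 1 = ∑ i ∈ Finset.range n, q ^ i := by
  induction n with
  | zero => simp [qChoose_zero_succ]
  | succ n ih =>
    show qChoose q n 0 + q ^ (0 + 1) * qChoose q n 1 = _
    rw [qChoose_zero_right, ih, Finset.sum_range_succ', Finset.mul_sum]
    simp only [pow_succ, pow_zero, one_mul]
    rw [add_comm]
    congr 1
    exact Finset.sum_congr rfl fun i _ => mul_comm _ _

lemma qChoose_symm_pascal (a b : ℕ) :
    qChoose q (a + 1) (b + 1) = q ^ (a - b) * qChoose q a b + qChoose q a (b + 1) := by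
  induction a generalizing b with
  | zero =>
    cases b with
    | zero => simp [qChoose_self, qChoose_succ_succ, qChoose_zero_succ, qChoose_zero_right]
    | succ b => rw [qChoose_succ_succ]; simp [qChoose_zero_succ]
  | succ a ih =>
    cases b with
    | zero =>
      rw [qChoose_one_right, qChoose_one_right, qChoose_zero_right, Finset.sum_range_succ]
      ring_nf
      rw [Nat.sub_zero]
      ring
    | succ b =>
      rw [qChoose_succ_succ]
      have h1 : a + 1 - (b + 1) = a - b := by omega
      rw [h1]
      rcases le_or_gt (b + 1) a with h | h
      · obtain ⟨c, hc⟩ : ∃ c, a = b + 1 + c := ⟨a - (b + 1), by omega⟩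
        have e1 := ih b
        have e2 := ih (b + 1)
        have h2 : a - b = c + 1 := by omega
        have h3 : a - (b + 1) = c := by omega
        rw [h2] at e1 ⊢
        rw [h3] at e2
        have e3 := qChoose_succ_succ q a b
        have e4 := qChoose_succ_succ q a (b + 1)
        linear_combination e1 + q ^ (b + 2) * e2 - q ^ (c + 1) * e3 - e4
      · have h0 : a - b = 0 := by omega
        rw [h0, pow_zero, one_mul]
        rw [qChoose_eq_zero q (show a + 1 < b + 2 by omega)]
        ring
  end aux

section aux2
variable {A : Type*} [CommRing A] (q : A)

lemma tri_succ (j : ℕ) : (j + 1) * (j + 1 - 1) / 2 = j * (j - 1) / 2 + j := by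
  have h1 : Even (j * (j - 1)) := by
    cases j with
    | zero => simp
    | succ j => simpa [Nat.mul_comm] using Nat.even_mul_succ_self j
  have h2 : (j + 1) * (j + 1 - 1) = j * (j - 1) + 2 * j := by
    cases j with
    | zero => simp
    | succ j =>
      simp only [Nat.add_sub_cancel]
      ring
  obtain ⟨c, hc⟩ := h1
  omega

lemma sum_q_pow_qChoose (n s : ℕ) :
    ∑ k ∈ Finset.range (s + 1), q ^ k * qChoose q (n + k) k = qChoose q (n + 1 + s) s := by
  induction s with
  | zero => simp [qChoose_zero_right]
  | succ s ih =>
    rw [Finset.sum_range_succ, ih]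
    have h1 : n + 1 + (s + 1) = (n + 1 + s) + 1 := by omega
    rw [h1, qChoose_succ_succ]
    have h2 : n + (s + 1) = n + 1 + s := by omega
    rw [h2]

lemma key_conv (n s : ℕ) :
    ∑ i ∈ Finset.range (s + 1),
      (-1 : A) ^ i * q ^ (i * (i - 1) / 2) * qChoose q (n + 1) i
        * qChoose q (n + (s - i)) (s - i)
    = if s = 0 then 1 else 0 := by
  induction n generalizing s with
  | zero =>
    cases s with
    | zero => simp [qChoose_zero_right, qChoose_self]
    | succ s =>
      rw [Finset.sum_range_succ', Finset.sum_range_succ']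
      have hz : ∀ i ∈ Finset.range s,
          (-1 : A) ^ (i + 1 + 1) * q ^ ((i + 1 + 1) * (i + 1 + 1 - 1) / 2)
            * qChoose q (0 + 1) (i + 1 + 1)
            * qChoose q (0 + (s + 1 - (i + 1 + 1))) (s + 1 - (i + 1 + 1)) = 0 := by
        intro i _
        rw [qChoose_eq_zero q (by omega)]
        ring
      rw [Finset.sum_eq_zero hz]
      simp [qChoose_zero_right, qChoose_self, qChoose_one_right]
  | succ n ih =>
    cases s with
    | zero => simp [qChoose_zero_right]
    | succ t =>
      set s := t + 1 with hs
      -- peel first term, apply V-Pascal to the rest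
      have vpascal : ∀ j : ℕ,
          (-1 : A) ^ (j + 1) * q ^ ((j + 1) * (j + 1 - 1) / 2) * qChoose q (n + 1 + 1) (j + 1)
          = (-1 : A) ^ (j + 1) * q ^ ((j + 1) * (j + 1 - 1) / 2) * qChoose q (n + 1) (j + 1)
            - q ^ (n + 1) * ((-1 : A) ^ j * q ^ (j * (j - 1) / 2) * qChoose q (n + 1) j) := by
        intro j
        rcases le_or_gt (j + 1) (n + 2) with h | h
        · rw [qChoose_symm_pascal q (n + 1) j]
          have h1 : q ^ ((j + 1) * (j + 1 - 1) / 2) * q ^ (n + 1 - j)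
              = q ^ (n + 1) * q ^ (j * (j - 1) / 2) := by
            rw [← pow_add, ← pow_add]
            congr 1
            rw [tri_succ]
            omega
          calc (-1 : A) ^ (j + 1) * q ^ ((j + 1) * (j + 1 - 1) / 2)
                * (q ^ (n + 1 - j) * qChoose q (n + 1) j + qChoose q (n + 1) (j + 1))
              = (-1 : A) ^ (j + 1) * (q ^ ((j + 1) * (j + 1 - 1) / 2) * q ^ (n + 1 - j))
                  * qChoose q (n + 1) j
                + (-1 : A) ^ (j + 1) * q ^ ((j + 1) * (j + 1 - 1) / 2)
                  * qChoose q (n + 1) (j + 1) := by ring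
            _ = _ := by rw [h1]; ring
        · rw [qChoose_eq_zero q (show n + 1 + 1 < j + 1 by omega),
            qChoose_eq_zero q (show n + 1 < j + 1 by omega),
            qChoose_eq_zero q (show n + 1 < j by omega)]
          ring
      have upascal : ∀ i ∈ Finset.range s,
          qChoose q (n + 1 + (s - i)) (s - i)
          = q ^ (n + 1) * qChoose q (n + 1 + (s - (i + 1))) (s - (i + 1))
            + qChoose q (n + (s - i)) (s - i) := by
        intro i hi
        simp only [Finset.mem_range] at hi
        obtain ⟨d, hd⟩ : ∃ d, s - i = d + 1 := ⟨s - i - 1, by omega⟩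
        have h1 : n + 1 + (s - i) = (n + d + 1) + 1 := by omega
        have h3 : s - (i + 1) = d := by omega
        rw [h1, hd, h3, qChoose_symm_pascal]
        have h4 : n + d + 1 - d = n + 1 := by omega
        have h5 : n + 1 + d = n + d + 1 := by omega
        have h6 : n + (d + 1) = n + d + 1 := by omega
        rw [h4, h5, h6]
      set F : ℕ → A := fun i => (-1 : A) ^ i * q ^ (i * (i - 1) / 2)
        * qChoose q (n + 1 + 1) i * qChoose q (n + 1 + (s - i)) (s - i) with hF
      set G : ℕ → A := fun i => (-1 : A) ^ i * q ^ (i * (i - 1) / 2)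
        * qChoose q (n + 1) i with hG
      have hA : ∑ i ∈ Finset.range (s + 1), F i
          = (∑ i ∈ Finset.range (s + 1), G i * qChoose q (n + 1 + (s - i)) (s - i))
            - q ^ (n + 1) * ∑ j ∈ Finset.range s,
                G j * qChoose q (n + 1 + (s - (j + 1))) (s - (j + 1)) := by
        rw [Finset.sum_range_succ' F s,
          Finset.sum_range_succ' (fun i => G i * qChoose q (n + 1 + (s - i)) (s - i)) s,
          Finset.mul_sum]
        have h0 : F 0 = G 0 * qChoose q (n + 1 + (s - 0)) (s - 0) := by
          simp [hF, hG, qChoose_zero_right]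
        rw [h0, add_sub_right_comm]
        congr 1
        rw [← Finset.sum_sub_distrib]
        apply Finset.sum_congr rfl
        intro j _
        simp only [hF, hG]
        rw [vpascal j]
        ring
      have hB : ∑ i ∈ Finset.range (s + 1), G i * qChoose q (n + 1 + (s - i)) (s - i)
          = (∑ i ∈ Finset.range (s + 1), G i * qChoose q (n + (s - i)) (s - i))
            + q ^ (n + 1) * ∑ j ∈ Finset.range s,
                G j * qChoose q (n + 1 + (s - (j + 1))) (s - (j + 1)) := by
        have hB0 : ∑ i ∈ Finset.range s, G i * qChoose q (n + 1 + (s - i)) (s - i)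
            = ∑ i ∈ Finset.range s, (G i * qChoose q (n + (s - i)) (s - i)
              + q ^ (n + 1) * (G i * qChoose q (n + 1 + (s - (i + 1))) (s - (i + 1)))) := by
          apply Finset.sum_congr rfl
          intro i hi
          rw [upascal i hi]
          ring
        rw [Finset.sum_range_succ,
          Finset.sum_range_succ (fun i => G i * qChoose q (n + (s - i)) (s - i)),
          hB0, Finset.sum_add_distrib, Finset.mul_sum]
        simp only [Nat.sub_self, qChoose_zero_right]
        try ring
      have hIH := ih s
      rw [if_neg (by omega : ¬ s = 0)] at hIH ⊢
      calc ∑ i ∈ Finset.range (s + 1), F i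
          = (∑ i ∈ Finset.range (s + 1), G i * qChoose q (n + (s - i)) (s - i))
              + q ^ (n + 1) * (∑ j ∈ Finset.range s,
                G j * qChoose q (n + 1 + (s - (j + 1))) (s - (j + 1)))
              - q ^ (n + 1) * ∑ j ∈ Finset.range s,
                G j * qChoose q (n + 1 + (s - (j + 1))) (s - (j + 1)) := by
            rw [hA, hB]
        _ = ∑ i ∈ Finset.range (s + 1), G i * qChoose q (n + (s - i)) (s - i) := by ring
        _ = 0 := by rw [← hIH]
  end aux2

lemma map_qChoose {R A : Type*} [CommRing R] [CommRing A] (f : R →+* A) (q : R) :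
    ∀ n k : ℕ, f (qChoose q n k) = qChoose (f q) n k := by
  intro n
  induction n with
  | zero => intro k; cases k with
    | zero => simp [qChoose_zero_right]
    | succ k => simp [qChoose_zero_succ]
  | succ n ih =>
    intro k
    cases k with
    | zero => simp [qChoose_zero_right]
    | succ k => rw [qChoose_succ_succ, qChoose_succ_succ, map_add, map_mul, map_pow, ih, ih]

lemma sum_tri {M : Type*} [AddCommMonoid M] (m : ℕ) (f : ℕ → ℕ → M) :
    ∑ k ∈ Finset.range (m + 1), ∑ j ∈ Finset.range (m - k + 1), f k (k + j)
      = ∑ s ∈ Finset.range (m + 1), ∑ k ∈ Finset.range (s + 1), f k s := by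
  rw [Finset.sum_sigma', Finset.sum_sigma']
  apply Finset.sum_nbij' (fun p => (⟨p.1 + p.2, p.1⟩ : Σ _ : ℕ, ℕ))
    (fun p => (⟨p.2, p.1 - p.2⟩ : Σ _ : ℕ, ℕ))
  · intro p hp
    simp only [Finset.mem_sigma, Finset.mem_range] at hp ⊢
    omega
  · intro p hp
    simp only [Finset.mem_sigma, Finset.mem_range] at hp ⊢
    omega
  · intro p hp
    obtain ⟨a, b⟩ := p
    simp only [Finset.mem_sigma, Finset.mem_range] at hp
    have h : a + b - a = b := by omega
    rw [h]
  · intro p hp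
    obtain ⟨a, b⟩ := p
    simp only [Finset.mem_sigma, Finset.mem_range] at hp
    have h : b + (a - b) = a := by omega
    rw [h]
  · intro p hp
    rfl

/-- On the twisted divided power polynomial ring `B = A⟨ξ⟩_{q,y}` (basis `b`), if `σ_B` is the
`σ_A`-semilinear ring endomorphism with `σ_B(ξ^{[n]}) = Σ_{i≤n} y^i ξ^{[n−i]}`, then
`ξ^{[n]} · σ_B^n(ξ^{[m]}) = (m+n choose n)_q ξ^{[n+m]}` for all `m, n`. -/
theorem statement12 {R A B : Type*} [CommRing R] [CommRing A] [Algebra R A]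
    [CommRing B] [Algebra A B]
    (q : R) (σA : A →ₐ[R] A) (y : A) (hy : σA y = algebraMap R A q * y)
    (b : Module.Basis ℕ A B)
    (hb : ∀ m n : ℕ, b m * b n = ∑ i ∈ Finset.range (min m n + 1),
      dpCoeff (algebraMap R A q) y m n i • b (m + n - i))
    (σB : B → B)
    (hadd : ∀ u v : B, σB (u + v) = σB u + σB v)
    (hsmul : ∀ (a : A) (u : B), σB (a • u) = σA a • σB u)
    (hrule : ∀ n : ℕ, σB (b n) = ∑ i ∈ Finset.range (n + 1), y ^ i • b (n - i)) :
    ∀ m n : ℕ, b n * σB^[n] (b m) = qChoose (algebraMap R A q) (m + n) n • b (n + m) := by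
  intro m n
  set qA : A := algebraMap R A q with hqA
  have hfix : ∀ a c : ℕ, σA (qChoose qA a c) = qChoose qA a c := by
    intro a c
    rw [hqA, ← map_qChoose (algebraMap R A) q a c, AlgHom.commutes,
      map_qChoose (algebraMap R A) q a c]
  have hsum : ∀ (t : Finset ℕ) (f : ℕ → B), σB (∑ k ∈ t, f k) = ∑ k ∈ t, σB (f k) :=
    fun t f => map_sum (AddMonoidHom.mk' σB hadd) f t
  have iter : ∀ n m : ℕ, σB^[n + 1] (b m)
      = ∑ k ∈ Finset.range (m + 1), (qChoose qA (n + k) k * y ^ k) • b (m - k) := by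
    intro n
    induction n with
    | zero =>
      intro m
      rw [Function.iterate_one, hrule m]
      apply Finset.sum_congr rfl
      intro k _
      rw [zero_add, qChoose_self, one_mul]
    | succ n ih =>
      intro m
      rw [Function.iterate_succ_apply', ih m, hsum]
      have step : ∀ k ∈ Finset.range (m + 1),
          σB ((qChoose qA (n + k) k * y ^ k) • b (m - k))
          = ∑ j ∈ Finset.range (m - k + 1),
              (fun k s => ((qA ^ k * qChoose qA (n + k) k) * y ^ s) • b (m - s)) k (k + j) := by
        intro k _
        rw [hsmul, hrule (m - k), Finset.smul_sum]
        apply Finset.sum_congr rfl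
        intro j _
        simp only
        rw [smul_smul, Nat.sub_sub]
        congr 1
        rw [map_mul, hfix, map_pow, hy, mul_pow, pow_add]
        ring
      rw [Finset.sum_congr rfl step,
        sum_tri m (fun k s => ((qA ^ k * qChoose qA (n + k) k) * y ^ s) • b (m - s))]
      apply Finset.sum_congr rfl
      intro s _
      rw [← Finset.sum_smul, ← Finset.sum_mul, sum_q_pow_qChoose]
  cases n with
  | zero =>
    simp only [Function.iterate_zero, id_eq]
    rw [hb 0 m]
    simp [dpCoeff, qChoose_zero_right, qChoose_self]
  | succ n =>
    rw [iter n m, Finset.mul_sum]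
    have step1 : ∀ k ∈ Finset.range (m + 1),
        b (n + 1) * ((qChoose qA (n + k) k * y ^ k) • b (m - k))
        = ∑ i ∈ Finset.range (m - k + 1),
            (fun k s => ((qChoose qA (n + k) k)
                * ((-1 : A) ^ (s - k) * qA ^ ((s - k) * ((s - k) - 1) / 2)
                    * qChoose qA (n + 1) (s - k))
                * qChoose qA (n + 1 + (m - s)) (n + 1) * y ^ s)
              • b (n + 1 + (m - s))) k (k + i) := by
      intro k hk
      simp only [Finset.mem_range] at hk
      rw [mul_smul_comm, hb (n + 1) (m - k)]
      have hsub : Finset.range (min (n + 1) (m - k) + 1) ⊆ Finset.range (m - k + 1) :=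
        Finset.range_subset_range.2 (by omega)
      rw [Finset.sum_subset hsub (by
        intro i h1 h2
        simp only [Finset.mem_range] at h1 h2
        have hni : n + 1 < i := by omega
        simp only [dpCoeff, qChoose_eq_zero qA hni, mul_zero, zero_mul, zero_smul])]
      rw [Finset.smul_sum]
      apply Finset.sum_congr rfl
      intro i hi
      simp only [Finset.mem_range] at hi
      simp only
      rw [smul_smul]
      have hki : k + i - k = i := by omega
      have hidx : n + 1 + (m - k) - i = n + 1 + (m - (k + i)) := by omega
      rw [hki, hidx]
      congr 1
      simp only [dpCoeff]
      rw [hidx, pow_add]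
      ring
    rw [Finset.sum_congr rfl step1,
      sum_tri m (fun k s => ((qChoose qA (n + k) k)
        * ((-1 : A) ^ (s - k) * qA ^ ((s - k) * ((s - k) - 1) / 2)
            * qChoose qA (n + 1) (s - k))
        * qChoose qA (n + 1 + (m - s)) (n + 1) * y ^ s)
      • b (n + 1 + (m - s)))]
    have step2 : ∀ s ∈ Finset.range (m + 1),
        (∑ k ∈ Finset.range (s + 1), ((qChoose qA (n + k) k)
            * ((-1 : A) ^ (s - k) * qA ^ ((s - k) * ((s - k) - 1) / 2)
                * qChoose qA (n + 1) (s - k))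
            * qChoose qA (n + 1 + (m - s)) (n + 1) * y ^ s)
          • b (n + 1 + (m - s)))
        = if s = 0 then qChoose qA (n + 1 + m) (n + 1) • b (n + 1 + m) else 0 := by
      intro s _
      rw [← Finset.sum_smul]
      have hD : ∑ k ∈ Finset.range (s + 1), (qChoose qA (n + k) k)
            * ((-1 : A) ^ (s - k) * qA ^ ((s - k) * ((s - k) - 1) / 2)
                * qChoose qA (n + 1) (s - k))
            * qChoose qA (n + 1 + (m - s)) (n + 1) * y ^ s
          = (∑ i ∈ Finset.range (s + 1), (-1 : A) ^ i * qA ^ (i * (i - 1) / 2)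
              * qChoose qA (n + 1) i * qChoose qA (n + (s - i)) (s - i))
            * (qChoose qA (n + 1 + (m - s)) (n + 1) * y ^ s) := by
        rw [Finset.sum_mul, ← Finset.sum_range_reflect (fun i => ((-1 : A) ^ i
          * qA ^ (i * (i - 1) / 2) * qChoose qA (n + 1) i * qChoose qA (n + (s - i)) (s - i))
          * (qChoose qA (n + 1 + (m - s)) (n + 1) * y ^ s)) (s + 1)]
        apply Finset.sum_congr rfl
        intro k hk
        simp only [Finset.mem_range] at hk
        have h1 : s + 1 - 1 - k = s - k := by omega
        have h2 : s - (s - k) = k := by omega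
        rw [h1, h2]
        ring
      rw [hD, key_conv qA n s]
      by_cases hs0 : s = 0
      · subst hs0
        simp
      · rw [if_neg hs0, if_neg hs0, zero_mul, zero_smul]
    rw [Finset.sum_congr rfl step2, Finset.sum_ite_eq' (Finset.range (m + 1)) 0
      (fun _ => qChoose qA (n + 1 + m) (n + 1) • b (n + 1 + m))]
    rw [if_pos (Finset.mem_range.2 (by omega))]
    have hmn : m + (n + 1) = n + 1 + m := by omega
    rw [hmn]
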